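/- The equation G(y) - y G'(y) - y = 0 with G(y) = (1-μy)^{2/3} has a real positive root y with 1 - μy > 0 if and only if 0 < μ ≤ μ* where μ* = (3/2)(104 - 60√3)^{1/3}. -/

import Mathlib

open Real

set_option maxHeartbeats 1000000

private lemma sqrt3_sq : Real.sqrt 3 ^ 2 = 3 := Real.sq_sqrt (by norm_num)

private lemma hc_pos : (0:ℝ) < 104 - 60 * Real.sqrt 3 := by
  nlinarith [sqrt3_sq, Real.sqrt_nonneg 3, sq_nonneg (Real.sqrt 3 - 26/15)]

private lemma key_ineq (s : ℝ) :
    8 * s * (1 - s) ^ 3 ≤ (104 - 60 * Real.sqrt 3) * (2 + s) ^ 3 := by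
  set r := Real.sqrt 3 with hrdef
  have hr : r ^ 2 = 3 := sqrt3_sq
  have hid : (104 - 60*r) * (2+s)^3 - 8*s*(1-s)^3
      = 8 * (s - (3*r - 5))^2 * ((s - 3*r/4)^2 + 5/16) := by
    linear_combination (-81/2*r^2 + 135*s*r + 135*r - 297/2*s^2 - 405*s - 513/2) * hr
  have h2 : (0:ℝ) ≤ 8 * (s - (3*r - 5))^2 * ((s - 3*r/4)^2 + 5/16) := by positivity
  linarith [hid, h2]

private lemma cube_of_rpow {x : ℝ} (hx : 0 ≤ x) : (x ^ ((1:ℝ)/3)) ^ (3:ℕ) = x := by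
  rw [← Real.rpow_natCast (x ^ ((1:ℝ)/3)) 3, ← Real.rpow_mul hx]
  norm_num

private lemma rpow_of_cube {x : ℝ} (hx : 0 ≤ x) : (x ^ (3:ℕ)) ^ ((1:ℝ)/3) = x := by
  rw [← Real.rpow_natCast x 3, ← Real.rpow_mul hx]
  norm_num

private lemma deriv_G (μ : ℝ) (G : ℝ → ℝ)
    (hG : ∀ y, G y = (1 - μ * y) ^ ((2:ℝ)/3)) {y : ℝ} (hy : 0 < 1 - μ * y) :
    deriv G y = -μ * ((2:ℝ)/3) * (1 - μ * y) ^ ((2:ℝ)/3 - 1) := by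
  have h1 : HasDerivAt (fun x : ℝ => 1 - μ * x) (-μ) y := by
    have := (hasDerivAt_const y (1:ℝ)).sub ((hasDerivAt_id y).const_mul μ)
    simp only [id, zero_sub, mul_one] at this
    exact this
  have h2 := h1.rpow_const (p := (2:ℝ)/3) (Or.inl hy.ne')
  have hGe : G = fun x => (1 - μ * x) ^ ((2:ℝ)/3) := funext hG
  rw [hGe, h2.deriv]

/-- The equation `G - y G' - y = 0` with `G(y) = (1-μy)^{2/3}` has a real
positive root `y` with `1 - μ y > 0` if and only if
`0 < μ ≤ μ* = (3/2)(104 - 60√3)^{1/3}`. -/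
theorem stmt_3 (μ : ℝ) (hμ : 0 < μ) (G : ℝ → ℝ)
    (hG : ∀ y, G y = (1 - μ * y) ^ ((2 : ℝ) / 3)) :
    (∃ y : ℝ, 0 < y ∧ 1 - μ * y > 0 ∧ G y - y * deriv G y - y = 0) ↔
      μ ≤ (3 / 2) * (104 - 60 * Real.sqrt 3) ^ ((1 : ℝ) / 3) := by
  have hr : Real.sqrt 3 ^ 2 = 3 := sqrt3_sq
  have hrn : (0:ℝ) ≤ Real.sqrt 3 := Real.sqrt_nonneg 3
  set c : ℝ := 104 - 60 * Real.sqrt 3 with hcdef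
  have hc : 0 < c := hc_pos
  set M : ℝ := (3/2) * c ^ ((1:ℝ)/3) with hMdef
  have hMpos : 0 < M := by
    have := Real.rpow_pos_of_pos hc ((1:ℝ)/3)
    positivity
  have hM3 : M ^ 3 = 27/8 * c := by
    have h := cube_of_rpow hc.le
    rw [hMdef, mul_pow, h]
    norm_num
  constructor
  · rintro ⟨y, hy, hu, heq⟩
    set u : ℝ := 1 - μ * y with hudef
    set t : ℝ := u ^ ((1:ℝ)/3) with htdef
    have ht0 : 0 < t := Real.rpow_pos_of_pos hu _
    have ht3 : t ^ (3:ℕ) = u := cube_of_rpow hu.le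
    have h23 : u ^ ((2:ℝ)/3) = t ^ (2:ℕ) := by
      rw [← ht3, ← Real.rpow_natCast t 3, ← Real.rpow_mul ht0.le,
        ← Real.rpow_natCast t 2]
      norm_num
    have hm13 : u ^ ((2:ℝ)/3 - 1) = t ^ 2 / t ^ 3 := by
      rw [Real.rpow_sub hu, Real.rpow_one, h23, ht3]
    have hfrac : t ^ 2 / t ^ 3 = 1 / t := by
      rw [div_eq_div_iff (pow_ne_zero 3 ht0.ne') ht0.ne']; ring
    rw [hG y, deriv_G μ G hG hu, ← hudef, h23, hm13, hfrac] at heq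
    -- heq : t^2 - y * (-μ * (2/3) * (1/t)) - y = 0
    have hμy : μ * y = 1 - t ^ 3 := by rw [ht3, hudef]; ring
    have hinv : (1/t) * t = 1 := by field_simp
    have hA : 3*t^3 + 2*(μ*y) - 3*t*y = 0 := by
      linear_combination (3*t) * heq - 2*μ*y*hinv
    have h3ty : 3*t*y = 2 + t^3 := by
      linear_combination -hA + 2*hμy
    have hkey : μ * (2 + t^3) = 3*t*(1 - t^3) := by
      have hfact : y * (μ*(2+t^3) - 3*t*(1-t^3)) = 0 := by
        linear_combination (2+t^3)*hμy - (1-t^3)*h3ty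
      have := (mul_eq_zero.mp hfact).resolve_left hy.ne'
      linarith [this]
    have hcube : μ^3 * (2 + t^3)^3 = 27 * t^3 * (1 - t^3)^3 := by
      linear_combination (μ^2*(2+t^3)^2 + μ*(2+t^3)*(3*t*(1-t^3)) + 9*t^2*(1-t^3)^2) * hkey
    have h8 : (0:ℝ) < (2 + t^3)^3 := by positivity
    have hμ3 : μ ^ 3 ≤ 27/8 * c := by
      have hki := key_ineq (t^3)
      nlinarith [hki, hcube, h8]
    nlinarith [hμ3, hM3, hMpos, hμ, sq_nonneg (μ - M), sq_nonneg (μ + M), mul_pos hμ hMpos]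
  · intro hle
    set s0 : ℝ := 3 * Real.sqrt 3 - 5 with hs0def
    have hs0 : 0 < s0 := by nlinarith [hr, hrn, sq_nonneg (Real.sqrt 3 - 5/3)]
    have hs0' : s0 < 1 := by nlinarith [hr, hrn, sq_nonneg (Real.sqrt 3 - 2)]
    set t0 : ℝ := s0 ^ ((1:ℝ)/3) with ht0def
    have ht0pos : 0 < t0 := Real.rpow_pos_of_pos hs0 _
    have ht03 : t0 ^ (3:ℕ) = s0 := cube_of_rpow hs0.le
    have ht01 : t0 < 1 := by
      rw [ht0def]
      exact Real.rpow_lt_one hs0.le hs0' (by norm_num)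
    have hx : (0:ℝ) ≤ (Real.sqrt 3 - 1) * t0 := by
      apply mul_nonneg _ ht0pos.le
      nlinarith [hr, hrn]
    have hx3 : ((Real.sqrt 3 - 1) * t0) ^ (3:ℕ) = c := by
      rw [mul_pow, ht03, hcdef, hs0def]
      linear_combination (3 * Real.sqrt 3 ^ 2 - 14 * Real.sqrt 3 + 33) * hr
    have hMt0 : M = (3/2) * ((Real.sqrt 3 - 1) * t0) := by
      rw [hMdef, ← hx3, rpow_of_cube hx]
    -- intermediate value theorem for f(t) = 3t(1-t³) - μ(2+t³)
    set g : ℝ → ℝ := fun t => 3*t*(1 - t^3) - μ*(2 + t^3) with hgdef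
    have hgcont : ContinuousOn g (Set.Icc 0 t0) := by
      apply Continuous.continuousOn
      rw [hgdef]
      fun_prop
    have hg0 : g 0 = -(2*μ) := by simp [hgdef]; ring
    have hgt0 : 0 ≤ g t0 := by
      have hge : g t0 = (M - μ) * (2 + s0) := by
        simp only [hgdef]
        rw [ht03, hMt0, hs0def]
        linear_combination (-(9:ℝ)/2 * t0) * hr
      rw [hge]
      have h2s : (0:ℝ) < 2 + s0 := by linarith
      nlinarith [hle, h2s]
    have hzero : (0:ℝ) ∈ Set.Icc (g 0) (g t0) := by
      constructor
      · rw [hg0]; linarith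
      · exact hgt0
    obtain ⟨t, ht_mem, hgt⟩ := intermediate_value_Icc ht0pos.le hgcont hzero
    have htpos : 0 < t := by
      rcases lt_or_eq_of_le ht_mem.1 with h | h
      · exact h
      · exfalso; rw [← h, hg0] at hgt; linarith
    have ht1 : t < 1 := lt_of_le_of_lt ht_mem.2 ht01
    have hkey : 3*t*(1 - t^3) = μ*(2 + t^3) := by
      simp only [hgdef] at hgt
      linarith [hgt]
    have hts : t ^ 3 < 1 := by nlinarith [htpos, ht1]
    have hupos : 0 < 1 - μ * ((1 - t^3)/μ) := by
      rw [show (1 - μ * ((1 - t^3)/μ)) = t^3 by field_simp; ring]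
      positivity
    refine ⟨(1 - t^3)/μ, div_pos (by linarith) hμ, hupos, ?_⟩
    set y : ℝ := (1 - t^3)/μ with hydef
    have h1u : 1 - μ * y = t^3 := by rw [hydef]; field_simp; ring
    rw [hG y, deriv_G μ G hG hupos, h1u]
    have e1 : (t^3 : ℝ) ^ ((2:ℝ)/3) = t^(2:ℕ) := by
      rw [← Real.rpow_natCast t 3, ← Real.rpow_mul htpos.le, ← Real.rpow_natCast t 2]
      norm_num
    have e2 : (t^3 : ℝ) ^ ((2:ℝ)/3 - 1) = t^2 / t^3 := by
      rw [Real.rpow_sub (by positivity), Real.rpow_one, e1]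
    have hfrac : t^2 / t^3 = 1/t := by
      rw [div_eq_div_iff (pow_ne_zero 3 htpos.ne') htpos.ne']; ring
    rw [e1, e2, hfrac]
    have hinv : (1/t) * t = 1 := by field_simp
    have hyval : μ * y = 1 - t^3 := by rw [hydef]; field_simp
    have hfact : μ * (3*t) * (t^2 - y * (-μ * ((2:ℝ)/3) * (1/t)) - y) = 0 := by
      linear_combination (2*μ^2*y)*hinv + (2*μ - 3*t)*hyval - hkey
    have hne : μ * (3*t) ≠ 0 := by positivity
    exact (mul_eq_zero.mp hfact).resolve_left hne
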